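/- Let 2H(q) = g(q)·σ be a 2-level Hamiltonian with |g(q)| ≥ g_0 > 0 for all q ∈ [q_-, q_+]. If the continuous path ĝ(q), q ∈ [q_-, q_+], intersects the plane through the origin orthogonal to ĝ(q_+) - ĝ(q_-) shifted to pass through (ĝ(q_+)+ĝ(q_-))/2, at some point ĝ(q*), then the rotation of the Bloch sphere about the axis ĝ(q*) by a suitable angle maps ĝ(q_-) to ĝ(q_+); equivalently, there exists τ ≤ 2π/|g(q*)| such that e^{-i H(q*) τ} maps the eigenprojection P_-(q_-) to P_-(q_+) by conjugation. -/

import Mathlib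

open Matrix

/-- `v ⬝ σ` for the vector of Pauli matrices `σ = (σ_x, σ_y, σ_z)`. -/
noncomputable def pauliDot (v : Fin 3 → ℝ) : Matrix (Fin 2) (Fin 2) ℂ :=
  !![(v 2 : ℂ), (v 0 : ℂ) - (v 1 : ℂ) * Complex.I;
     (v 0 : ℂ) + (v 1 : ℂ) * Complex.I, -(v 2 : ℂ)]

def crossP (v w : Fin 3 → ℝ) : Fin 3 → ℝ :=
  ![v 1 * w 2 - v 2 * w 1, v 2 * w 0 - v 0 * w 2, v 0 * w 1 - v 1 * w 0]

lemma conjPD (u a : Fin 3 → ℝ) (c s : ℝ) (hu : (∑ i, u i ^ 2) = 1) :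
    ((c : ℂ) • (1 : Matrix (Fin 2) (Fin 2) ℂ) + (-(Complex.I * s)) • pauliDot u) * pauliDot a *
      ((c : ℂ) • 1 + (Complex.I * s) • pauliDot u)
    = pauliDot (fun i => (c ^ 2 - s ^ 2) * a i + 2 * c * s * crossP u a i
        + 2 * s ^ 2 * (∑ j, u j * a j) * u i) := by
  have huC : (u 0 : ℂ)^2 + (u 1 : ℂ)^2 + (u 2 : ℂ)^2 = 1 := by
    have := hu; rw [Fin.sum_univ_three] at this; exact_mod_cast this
  ext i j
  fin_cases i <;> fin_cases j <;>
    (simp [pauliDot, crossP, Matrix.mul_apply, Matrix.one_apply, Fin.sum_univ_succ,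
      Fin.sum_univ_three]; push_cast)
  · linear_combination ((-1)*(s:ℂ)^2*(u 2:ℂ)^2*(a 2:ℂ) + (-2)*(s:ℂ)^2*(u 1:ℂ)*(u 2:ℂ)*(a 1:ℂ) + (1)*(s:ℂ)^2*(u 1:ℂ)^2*(a 2:ℂ) + (-2)*(s:ℂ)^2*(u 0:ℂ)*(u 2:ℂ)*(a 0:ℂ) + (1)*(s:ℂ)^2*(u 0:ℂ)^2*(a 2:ℂ) + (2)*(c:ℂ)*(s:ℂ)*(u 1:ℂ)*(a 0:ℂ) + (-2)*(c:ℂ)*(s:ℂ)*(u 0:ℂ)*(a 1:ℂ) + (2)*Complex.I^2*(s:ℂ)^2*(u 1:ℂ)*(u 2:ℂ)*(a 1:ℂ) + (-1)*Complex.I^2*(s:ℂ)^2*(u 1:ℂ)^2*(a 2:ℂ)) * Complex.I_sq + ((-1)*(s:ℂ)^2*(a 2:ℂ)) * huC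
  · linear_combination ((1)*(s:ℂ)^2*(u 2:ℂ)^2*(a 0:ℂ) + (1)*(s:ℂ)^2*(u 1:ℂ)^2*(a 0:ℂ) + (-2)*(s:ℂ)^2*(u 0:ℂ)*(u 2:ℂ)*(a 2:ℂ) + (-2)*(s:ℂ)^2*(u 0:ℂ)*(u 1:ℂ)*(a 1:ℂ) + (-1)*(s:ℂ)^2*(u 0:ℂ)^2*(a 0:ℂ) + (2)*(c:ℂ)*(s:ℂ)*(u 2:ℂ)*(a 1:ℂ) + (-2)*(c:ℂ)*(s:ℂ)*(u 1:ℂ)*(a 2:ℂ) + (-1)*Complex.I*(s:ℂ)^2*(u 2:ℂ)^2*(a 1:ℂ) + (2)*Complex.I*(s:ℂ)^2*(u 1:ℂ)*(u 2:ℂ)*(a 2:ℂ) + (1)*Complex.I*(s:ℂ)^2*(u 1:ℂ)^2*(a 1:ℂ) + (2)*Complex.I*(s:ℂ)^2*(u 0:ℂ)*(u 1:ℂ)*(a 0:ℂ) + (-1)*Complex.I*(s:ℂ)^2*(u 0:ℂ)^2*(a 1:ℂ) + (-1)*Complex.I^2*(s:ℂ)^2*(u 1:ℂ)^2*(a 0:ℂ)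 + (2)*Complex.I^2*(s:ℂ)^2*(u 0:ℂ)*(u 1:ℂ)*(a 1:ℂ) + (-1)*Complex.I^3*(s:ℂ)^2*(u 1:ℂ)^2*(a 1:ℂ)) * Complex.I_sq + ((-1)*(s:ℂ)^2*(a 0:ℂ) + (1)*Complex.I*(s:ℂ)^2*(a 1:ℂ)) * huC
  · linear_combination ((1)*(s:ℂ)^2*(u 2:ℂ)^2*(a 0:ℂ) + (1)*(s:ℂ)^2*(u 1:ℂ)^2*(a 0:ℂ) + (-2)*(s:ℂ)^2*(u 0:ℂ)*(u 2:ℂ)*(a 2:ℂ) + (-2)*(s:ℂ)^2*(u 0:ℂ)*(u 1:ℂ)*(a 1:ℂ) + (-1)*(s:ℂ)^2*(u 0:ℂ)^2*(a 0:ℂ) + (2)*(c:ℂ)*(s:ℂ)*(u 2:ℂ)*(a 1:ℂ) + (-2)*(c:ℂ)*(s:ℂ)*(u 1:ℂ)*(a 2:ℂ) + (1)*Complex.I*(s:ℂ)^2*(u 2:ℂ)^2*(a 1:ℂ) + (-2)*Complex.I*(s:ℂ)^2*(u 1:ℂ)*(u 2:ℂ)*(a 2:ℂ) + (-1)*Complex.I*(s:ℂ)^2*(u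 1:ℂ)^2*(a 1:ℂ) + (-2)*Complex.I*(s:ℂ)^2*(u 0:ℂ)*(u 1:ℂ)*(a 0:ℂ) + (1)*Complex.I*(s:ℂ)^2*(u 0:ℂ)^2*(a 1:ℂ) + (-1)*Complex.I^2*(s:ℂ)^2*(u 1:ℂ)^2*(a 0:ℂ) + (2)*Complex.I^2*(s:ℂ)^2*(u 0:ℂ)*(u 1:ℂ)*(a 1:ℂ) + (1)*Complex.I^3*(s:ℂ)^2*(u 1:ℂ)^2*(a 1:ℂ)) * Complex.I_sq + ((-1)*(s:ℂ)^2*(a 0:ℂ) + (-1)*Complex.I*(s:ℂ)^2*(a 1:ℂ)) * huC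
  · linear_combination ((1)*(s:ℂ)^2*(u 2:ℂ)^2*(a 2:ℂ) + (2)*(s:ℂ)^2*(u 1:ℂ)*(u 2:ℂ)*(a 1:ℂ) + (-1)*(s:ℂ)^2*(u 1:ℂ)^2*(a 2:ℂ) + (2)*(s:ℂ)^2*(u 0:ℂ)*(u 2:ℂ)*(a 0:ℂ) + (-1)*(s:ℂ)^2*(u 0:ℂ)^2*(a 2:ℂ) + (-2)*(c:ℂ)*(s:ℂ)*(u 1:ℂ)*(a 0:ℂ) + (2)*(c:ℂ)*(s:ℂ)*(u 0:ℂ)*(a 1:ℂ) + (-2)*Complex.I^2*(s:ℂ)^2*(u 1:ℂ)*(u 2:ℂ)*(a 1:ℂ) + (1)*Complex.I^2*(s:ℂ)^2*(u 1:ℂ)^2*(a 2:ℂ)) * Complex.I_sq + ((1)*(s:ℂ)^2*(a 2:ℂ)) * huC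


lemma expPauli (A : Matrix (Fin 2) (Fin 2) ℂ) (hA : A * A = 1) (φ : ℝ) :
    NormedSpace.exp ((-(Complex.I * φ)) • A)
      = (Real.cos φ : ℂ) • (1 : Matrix (Fin 2) (Fin 2) ℂ)
        + (-(Complex.I * Real.sin φ)) • A := by
  set t : ℂ := -(Complex.I * φ) with ht
  have ht2 : t ^ 2 = (-1) * (φ : ℂ) ^ 2 := by
    rw [show t = Complex.I * (-(φ:ℂ)) by rw [ht]; ring, mul_pow, Complex.I_sq]; ring
  have htk : ∀ k : ℕ, t ^ (2 * k) = (-1) ^ k * (φ : ℂ) ^ (2 * k) := by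
    intro k
    rw [pow_mul, ht2, mul_pow, ← pow_mul]
  have hA2k : ∀ k : ℕ, A ^ (2 * k) = 1 := by
    intro k; rw [pow_mul, sq, hA, one_pow]
  have heven : HasSum (fun k : ℕ => ((((2 * k).factorial : ℂ)))⁻¹ • ((t • A) ^ (2 * k)))
      ((Real.cos φ : ℂ) • (1 : Matrix (Fin 2) (Fin 2) ℂ)) := by
    have h := (Complex.hasSum_cos (φ : ℂ)).smul_const (1 : Matrix (Fin 2) (Fin 2) ℂ)
    rw [← Complex.ofReal_cos] at h
    convert h using 2 with k
    rw [smul_pow, hA2k, smul_smul, htk]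
    congr 1
    rw [div_eq_mul_inv]; ring
  have hodd : HasSum (fun k : ℕ => ((((2 * k + 1).factorial : ℂ)))⁻¹ • ((t • A) ^ (2 * k + 1)))
      ((-(Complex.I * Real.sin φ)) • A) := by
    have h := ((Complex.hasSum_sin (φ : ℂ)).mul_left (-Complex.I)).smul_const A
    rw [← Complex.ofReal_sin, neg_mul] at h
    convert h using 2 with k
    rw [smul_pow, pow_succ A, hA2k, one_mul, smul_smul, pow_succ t, htk]
    congr 1
    rw [ht, div_eq_mul_inv]; ring
  have hsum : HasSum (fun n : ℕ => ((n.factorial : ℂ))⁻¹ • (t • A) ^ n)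
      ((Real.cos φ : ℂ) • (1 : Matrix (Fin 2) (Fin 2) ℂ) + (-(Complex.I * Real.sin φ)) • A) :=
    HasSum.even_add_odd heven hodd
  rw [NormedSpace.exp_eq_tsum ℂ]
  exact hsum.tsum_eq

lemma rodrigues (u a b : Fin 3 → ℝ)
    (hu : ∑ i, u i ^ 2 = 1) (ha : ∑ i, a i ^ 2 = 1) (hb : ∑ i, b i ^ 2 = 1)
    (hdb : ∑ i, u i * b i = ∑ i, u i * a i) :
    ∃ θ : ℝ, 0 ≤ θ ∧ θ ≤ 2 * Real.pi ∧ ∀ i,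
      (Real.cos (θ/2) ^ 2 - Real.sin (θ/2) ^ 2) * a i
        + 2 * Real.cos (θ/2) * Real.sin (θ/2) * crossP u a i
        + 2 * Real.sin (θ/2) ^ 2 * (∑ j, u j * a j) * u i = b i := by
  simp only [Fin.sum_univ_three] at hu ha hb hdb
  obtain ⟨d, hd⟩ : ∃ d, u 0 * a 0 + u 1 * a 1 + u 2 * a 2 = d := ⟨_, rfl⟩
  rw [hd] at hdb
  by_cases hE : 1 - d ^ 2 = 0
  · -- degenerate case : a = b = d • u
    have h1 : (a 0 - d * u 0)^2 + (a 1 - d * u 1)^2 + (a 2 - d * u 2)^2 = 1 - d ^ 2 := by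
      linear_combination ha + d^2 * hu - 2*d*hd
    have h1b : (b 0 - d * u 0)^2 + (b 1 - d * u 1)^2 + (b 2 - d * u 2)^2 = 1 - d ^ 2 := by
      linear_combination hb + d^2 * hu - 2*d*hdb
    rw [hE] at h1 h1b
    have key : ∀ x y z : ℝ, x^2 + y^2 + z^2 = 0 → x = 0 := by
      intro x y z h
      have hx : x^2 = 0 := by linarith [sq_nonneg x, sq_nonneg y, sq_nonneg z]
      exact (pow_eq_zero_iff two_ne_zero).mp hx
    have ha0 : a 0 = d * u 0 := by
      have := key _ _ _ h1; linarith
    have ha1 : a 1 = d * u 1 := by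
      have := key (a 1 - d*u 1) (a 0 - d*u 0) (a 2 - d*u 2) (by linarith); linarith
    have ha2 : a 2 = d * u 2 := by
      have := key (a 2 - d*u 2) (a 0 - d*u 0) (a 1 - d*u 1) (by linarith); linarith
    have hb0 : b 0 = d * u 0 := by
      have := key _ _ _ h1b; linarith
    have hb1 : b 1 = d * u 1 := by
      have := key (b 1 - d*u 1) (b 0 - d*u 0) (b 2 - d*u 2) (by linarith); linarith
    have hb2 : b 2 = d * u 2 := by
      have := key (b 2 - d*u 2) (b 0 - d*u 0) (b 1 - d*u 1) (by linarith); linarith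
    have hai : ∀ i, a i = d * u i := by
      intro i; fin_cases i <;> [exact ha0; exact ha1; exact ha2]
    have hbi : ∀ i, b i = d * u i := by
      intro i; fin_cases i <;> [exact hb0; exact hb1; exact hb2]
    refine ⟨0, le_refl 0, by positivity, ?_⟩
    intro i
    simp only [Fin.sum_univ_three, hd]
    rw [hai i, hbi i]
    simp
  · -- nondegenerate case
    have hepos : 0 < 1 - d ^ 2 := by
      have h1 : (a 0 - d * u 0)^2 + (a 1 - d * u 1)^2 + (a 2 - d * u 2)^2 = 1 - d ^ 2 := by
        linear_combination ha + d^2 * hu - 2*d*hd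
      have hge : (0:ℝ) ≤ 1 - d ^ 2 := by
        rw [← h1]; positivity
      rcases lt_or_eq_of_le hge with h | h
      · exact h
      · exact absurd h.symm hE
    obtain ⟨ab, hab⟩ : ∃ ab, a 0 * b 0 + a 1 * b 1 + a 2 * b 2 = ab := ⟨_, rfl⟩
    obtain ⟨dt, hdt⟩ : ∃ dt, (u 1 * a 2 - u 2 * a 1) * b 0 + (u 2 * a 0 - u 0 * a 2) * b 1
        + (u 0 * a 1 - u 1 * a 0) * b 2 = dt := ⟨_, rfl⟩
    -- Gram identity : dt^2 + (ab - d^2)^2 = (1 - d^2)^2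
    have hgram : dt ^ 2 + (ab - d ^ 2) ^ 2 = (1 - d ^ 2) ^ 2 := by
      have hpure : ((u 1 * a 2 - u 2 * a 1) * b 0 + (u 2 * a 0 - u 0 * a 2) * b 1
            + (u 0 * a 1 - u 1 * a 0) * b 2) ^ 2
          = (u 0^2 + u 1^2 + u 2^2) * ((a 0^2 + a 1^2 + a 2^2) * (b 0^2 + b 1^2 + b 2^2)
              - (a 0 * b 0 + a 1 * b 1 + a 2 * b 2)^2)
            - (u 0 * a 0 + u 1 * a 1 + u 2 * a 2) * ((u 0 * a 0 + u 1 * a 1 + u 2 * a 2)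
                * (b 0^2 + b 1^2 + b 2^2)
              - (u 0 * b 0 + u 1 * b 1 + u 2 * b 2) * (a 0 * b 0 + a 1 * b 1 + a 2 * b 2))
            + (u 0 * b 0 + u 1 * b 1 + u 2 * b 2) * ((u 0 * a 0 + u 1 * a 1 + u 2 * a 2)
                * (a 0 * b 0 + a 1 * b 1 + a 2 * b 2)
              - (u 0 * b 0 + u 1 * b 1 + u 2 * b 2) * (a 0^2 + a 1^2 + a 2^2)) := by ring
      rw [hdt, hu, ha, hb, hd, hdb, hab] at hpure
      linear_combination hpure
    set C : ℝ := (ab - d ^ 2) / (1 - d ^ 2) with hC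
    set S : ℝ := dt / (1 - d ^ 2) with hS
    have hCS : C ^ 2 + S ^ 2 = 1 := by
      rw [hC, hS]
      field_simp
      linear_combination hgram
    have hC1 : -1 ≤ C ∧ C ≤ 1 := by
      constructor <;> nlinarith [sq_nonneg S, sq_nonneg C]
    obtain ⟨θ, hθ0, hθ2, hcos, hsin⟩ :
        ∃ θ : ℝ, 0 ≤ θ ∧ θ ≤ 2 * Real.pi ∧ Real.cos θ = C ∧ Real.sin θ = S := by
      by_cases hS0 : 0 ≤ S
      · refine ⟨Real.arccos C, Real.arccos_nonneg C, ?_, Real.cos_arccos hC1.1 hC1.2, ?_⟩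
        · linarith [Real.arccos_le_pi C, Real.pi_pos]
        · rw [Real.sin_arccos]
          rw [show 1 - C ^ 2 = S ^ 2 by linarith]
          exact Real.sqrt_sq hS0
      · push_neg at hS0
        refine ⟨2 * Real.pi - Real.arccos C, ?_, ?_, ?_, ?_⟩
        · linarith [Real.arccos_le_pi C, Real.pi_pos]
        · linarith [Real.arccos_nonneg C]
        · rw [Real.cos_sub, Real.cos_two_pi, Real.sin_two_pi]
          simp [Real.cos_arccos hC1.1 hC1.2]
        · rw [Real.sin_sub, Real.cos_two_pi, Real.sin_two_pi]
          rw [Real.sin_arccos, show 1 - C ^ 2 = S ^ 2 by linarith]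
          rw [Real.sqrt_sq_eq_abs, abs_of_neg hS0]
          ring
    refine ⟨θ, hθ0, hθ2, ?_⟩
    have hcs : Real.cos (θ/2) ^ 2 + Real.sin (θ/2) ^ 2 = 1 := by
      rw [add_comm]; exact Real.sin_sq_add_cos_sq _
    have hc2 : Real.cos (θ/2) ^ 2 - Real.sin (θ/2) ^ 2 = C := by
      rw [← Real.cos_two_mul', show 2 * (θ/2) = θ by ring, hcos]
    have hs2 : 2 * Real.sin (θ/2) * Real.cos (θ/2) = S := by
      rw [← Real.sin_two_mul, show 2 * (θ/2) = θ by ring, hsin]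
    intro i
    -- component-wise pure identity
    have hpure : b i * ((u 0^2 + u 1^2 + u 2^2) * (a 0^2 + a 1^2 + a 2^2)
          - (u 0 * a 0 + u 1 * a 1 + u 2 * a 2)^2)
        = ((u 1 * a 2 - u 2 * a 1) * b 0 + (u 2 * a 0 - u 0 * a 2) * b 1
            + (u 0 * a 1 - u 1 * a 0) * b 2) * crossP u a i
          + (a 0 * b 0 + a 1 * b 1 + a 2 * b 2) * ((u 0^2 + u 1^2 + u 2^2) * a i
              - (u 0 * a 0 + u 1 * a 1 + u 2 * a 2) * u i)
          - (u 0 * b 0 + u 1 * b 1 + u 2 * b 2) * ((u 0 * a 0 + u 1 * a 1 + u 2 * a 2) * a i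
              - (a 0^2 + a 1^2 + a 2^2) * u i) := by
      fin_cases i <;> simp [crossP] <;> ring
    rw [hdt, hu, ha, hd, hdb, hab] at hpure
    -- hpure : b i * (1*1 - d^2) = dt * crossP u a i + ab * (1 * a i - d * u i) - d * (d * a i - 1 * u i)
    simp only [Fin.sum_univ_three, hd]
    rw [hc2, show 2 * Real.cos (θ/2) * Real.sin (θ/2) = S by linarith [hs2],
      show 2 * Real.sin (θ/2) ^ 2 = 1 - C by linarith]
    rw [hC, hS]
    field_simp
    linear_combination (-1 : ℝ) * hpure

lemma pauliSq (v : Fin 3 → ℝ) (hv : (∑ i, v i ^ 2) = 1) :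
    pauliDot v * pauliDot v = 1 := by
  have hvC : (v 0 : ℂ)^2 + (v 1 : ℂ)^2 + (v 2 : ℂ)^2 = 1 := by
    have := hv; rw [Fin.sum_univ_three] at this; exact_mod_cast this
  ext i j
  fin_cases i <;> fin_cases j <;>
      simp [pauliDot, Matrix.mul_apply, Matrix.one_apply, Fin.sum_univ_succ]
  · linear_combination hvC - (v 1 : ℂ)^2 * Complex.I_sq
  · ring
  · ring
  · linear_combination hvC - (v 1 : ℂ)^2 * Complex.I_sq

lemma pdSmul (r : ℝ) (v : Fin 3 → ℝ) :
    pauliDot (fun i => r * v i) = (r : ℂ) • pauliDot v := by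
  ext i j
  fin_cases i <;> fin_cases j <;> simp [pauliDot] <;> push_cast <;> ring

theorem precession_maps_endpoint_projections
    (g : ℝ → Fin 3 → ℝ) (g0 : ℝ) (hg0 : 0 < g0)
    (gnorm : ℝ → ℝ) (hgnorm : ∀ q, gnorm q = Real.sqrt (∑ i, g q i ^ 2))
    (hgap : ∀ q, g0 ≤ gnorm q)
    (n : ℝ → Fin 3 → ℝ) (hn : ∀ q, n q = (gnorm q)⁻¹ • g q)
    (qm qp qs : ℝ) (hq : qm ≤ qp) (hqs : qs ∈ Set.Icc qm qp)
    (hplane : ∑ i, n qs i * (n qp i - n qm i) = 0)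
    (H : Matrix (Fin 2) (Fin 2) ℂ) (hH : H = (2 : ℂ)⁻¹ • pauliDot (g qs))
    (Pm : ℝ → Matrix (Fin 2) (Fin 2) ℂ)
    (hPm : ∀ q, Pm q = (2 : ℂ)⁻¹ • (1 - pauliDot (n q))) :
    ∃ τ : ℝ, 0 ≤ τ ∧ τ ≤ 2 * Real.pi / gnorm qs ∧
      NormedSpace.exp ((-(Complex.I * τ)) • H) * Pm qm *
        NormedSpace.exp ((Complex.I * τ) • H) = Pm qp := by
  have hgpos : ∀ q, 0 < gnorm q := fun q => lt_of_lt_of_le hg0 (hgap q)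
  have hunit : ∀ q, ∑ i, n q i ^ 2 = 1 := by
    intro q
    have h2 : gnorm q ^ 2 = ∑ i, g q i ^ 2 := by
      rw [hgnorm q, Real.sq_sqrt (by positivity)]
    have hq0 := hgpos q
    rw [hn q]
    simp only [Pi.smul_apply, smul_eq_mul, mul_pow, ← Finset.mul_sum]
    rw [← h2]
    field_simp
  have hdb : ∑ i, n qs i * n qp i = ∑ i, n qs i * n qm i := by
    have h := hplane
    simp only [mul_sub] at h
    rw [Finset.sum_sub_distrib] at h
    linarith
  obtain ⟨θ, hθ0, hθ2, hvec⟩ :=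
    rodrigues (n qs) (n qm) (n qp) (hunit qs) (hunit qm) (hunit qp) hdb
  have hgq := hgpos qs
  refine ⟨θ / gnorm qs, by positivity, by
      apply div_le_div_of_nonneg_right hθ2 hgq.le, ?_⟩
  set τ : ℝ := θ / gnorm qs with hτ
  set c : ℝ := Real.cos (θ / 2) with hc
  set s : ℝ := Real.sin (θ / 2) with hs
  set A : Matrix (Fin 2) (Fin 2) ℂ := pauliDot (n qs) with hA
  have hAA : A * A = 1 := pauliSq _ (hunit qs)
  have hgn : g qs = fun i => gnorm qs * n qs i := by
    funext i
    rw [hn qs]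
    simp only [Pi.smul_apply, smul_eq_mul]
    field_simp
  have hHA : H = ((gnorm qs / 2 : ℝ) : ℂ) • A := by
    rw [hH, hgn, pdSmul, smul_smul]
    congr 1
    push_cast
    ring
  have hgC : ((gnorm qs : ℝ) : ℂ) ≠ 0 := by
    exact_mod_cast hgq.ne'
  have hkey1 : (-(Complex.I * (τ:ℝ))) • H = (-(Complex.I * ((θ/2 : ℝ) : ℂ))) • A := by
    rw [hHA, smul_smul]
    congr 1
    rw [hτ]
    push_cast
    field_simp
  have hkey2 : ((Complex.I * (τ:ℝ))) • H = (-(Complex.I * ((-(θ/2) : ℝ) : ℂ))) • A := by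
    rw [hHA, smul_smul]
    congr 1
    rw [hτ]
    push_cast
    field_simp
  have hE1 : NormedSpace.exp ((-(Complex.I * (τ:ℝ))) • H)
      = (c : ℂ) • (1 : Matrix (Fin 2) (Fin 2) ℂ) + (-(Complex.I * (s:ℝ))) • A := by
    rw [hkey1, expPauli A hAA (θ/2), hc, hs]
  have hE2 : NormedSpace.exp (((Complex.I * (τ:ℝ))) • H)
      = (c : ℂ) • (1 : Matrix (Fin 2) (Fin 2) ℂ) + (Complex.I * (s:ℝ)) • A := by
    rw [hkey2, expPauli A hAA (-(θ/2)), Real.cos_neg, Real.sin_neg, hc, hs]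
    congr 1
    rw [Complex.ofReal_neg]
    ring
  have hinv : NormedSpace.exp ((-(Complex.I * (τ:ℝ))) • H) *
      NormedSpace.exp (((Complex.I * (τ:ℝ))) • H) = 1 := by
    rw [neg_smul, ← Matrix.exp_add_of_commute _ _ ((Commute.refl ((Complex.I * (τ:ℝ)) • H)).neg_left)]
    simp [NormedSpace.exp_zero]
  have hconj : ((c : ℂ) • (1 : Matrix (Fin 2) (Fin 2) ℂ) + (-(Complex.I * (s:ℝ))) • A) *
      pauliDot (n qm) * ((c : ℂ) • 1 + (Complex.I * (s:ℝ)) • A) = pauliDot (n qp) := by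
    rw [hA, conjPD (n qs) (n qm) c s (hunit qs)]
    exact congrArg pauliDot (funext hvec)
  rw [hE1, hE2] at hinv ⊢
  rw [hPm qm, hPm qp]
  rw [mul_smul_comm, smul_mul_assoc, mul_sub, sub_mul, mul_one, hinv, hconj]
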